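/- Every k-vertex-critical (P_3 + P_1)-free graph G satisfies α(G) ≤ 2 and |V(G)| ≤ 2k − 1, for all k ≥ 1. -/

import Mathlib

open SimpleGraph

/-- `G` is `k`-vertex-critical: `χ(G) = k` and deleting any vertex decreases `χ`. -/
def IsKVertexCritical {V : Type*} (G : SimpleGraph V) (k : ℕ) : Prop :=
  G.chromaticNumber = k ∧ ∀ v : V, (G.induce ({v}ᶜ : Set V)).chromaticNumber < k

/-- `G` has no induced subgraph isomorphic to `H`. -/
def InducedFree {V W : Type*} (G : SimpleGraph V) (H : SimpleGraph W) : Prop :=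
  ∀ s : Set V, IsEmpty (G.induce s ≃g H)

/-- `s` is an independent set of `G`. -/
def IsIndepSet {V : Type*} (G : SimpleGraph V) (s : Set V) : Prop :=
  s.Pairwise fun a b => ¬ G.Adj a b

/-- The graph `P_2 + ℓ P_1`: an edge together with `ℓ` isolated vertices. -/
def P2lP1 (ℓ : ℕ) : SimpleGraph (Fin (ℓ + 2)) := fromEdgeSet {s(0, 1)}

/-- The graph `P_3 + P_1`: a path on three vertices plus an isolated vertex. -/
def P3P1 : SimpleGraph (Fin 4) := fromEdgeSet {s(0, 1), s(1, 2)}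

/-- The paw: a triangle with a pendant vertex. -/
def paw : SimpleGraph (Fin 4) := fromEdgeSet {s(0, 1), s(0, 2), s(1, 2), s(2, 3)}

/-- The join of two graphs: all edges between the two sides are added. -/
def joinG {α β : Type*} (G : SimpleGraph α) (H : SimpleGraph β) : SimpleGraph (α ⊕ β) where
  Adj x y :=
    match x, y with
    | Sum.inl a, Sum.inl b => G.Adj a b
    | Sum.inr a, Sum.inr b => H.Adj a b
    | Sum.inl _, Sum.inr _ => True
    | Sum.inr _, Sum.inl _ => True
  symm := by
    refine ⟨?_⟩
    rintro (a | a) (b | b) h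
    · exact G.adj_symm h
    · trivial
    · trivial
    · exact H.adj_symm h
  loopless := by
    refine ⟨?_⟩
    rintro (a | a) h
    · exact G.irrefl h
    · exact H.irrefl h

/-- If `G` has an induced path `x-y-z` together with a vertex `w` nonadjacent to all
three, we get an induced `P₃+P₁`, contradicting freeness. -/
lemma free4 {V : Type} {G : SimpleGraph V} (hfree : InducedFree G P3P1)
    {x y z w : V} (hxz : x ≠ z) (hwx : w ≠ x) (hwy : w ≠ y) (hwz : w ≠ z)
    (axy : G.Adj x y) (ayz : G.Adj y z)
    (nxz : ¬ G.Adj x z) (nxw : ¬ G.Adj x w) (nyw : ¬ G.Adj y w) (nzw : ¬ G.Adj z w) :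
    False := by
  classical
  have hxy : x ≠ y := G.ne_of_adj axy
  have hyz : y ≠ z := G.ne_of_adj ayz
  have hyx : y ≠ x := hxy.symm
  have hzy : z ≠ y := hyz.symm
  have hzx : z ≠ x := hxz.symm
  have ayx : G.Adj y x := axy.symm
  have azy : G.Adj z y := ayz.symm
  have nzx : ¬ G.Adj z x := fun h => nxz h.symm
  have nwx : ¬ G.Adj w x := fun h => nxw h.symm
  have nwy : ¬ G.Adj w y := fun h => nyw h.symm
  have nwz : ¬ G.Adj w z := fun h => nzw h.symm
  set s : Set V := {x, y, z, w} with hs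
  have hx : x ∈ s := by simp [hs]
  have hy : y ∈ s := by simp [hs]
  have hz : z ∈ s := by simp [hs]
  have hw : w ∈ s := by simp [hs]
  let e : Fin 4 → ↥s := ![⟨x, hx⟩, ⟨y, hy⟩, ⟨z, hz⟩, ⟨w, hw⟩]
  let f : ↥s → Fin 4 := fun u =>
    if u.1 = x then 0 else if u.1 = y then 1 else if u.1 = z then 2 else 3
  have hleft : ∀ i, f (e i) = i := by
    intro i
    fin_cases i <;> simp [e, f, hyx, hzx, hzy, hwx, hwy, hwz]
  have hright : ∀ u, e (f u) = u := by
    rintro ⟨u, hu⟩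
    have : u = x ∨ u = y ∨ u = z ∨ u = w := by simpa [hs] using hu
    rcases this with rfl | rfl | rfl | rfl <;>
      simp [e, f, hyx, hzx, hzy, hwx, hwy, hwz]
  let iso : P3P1 ≃g G.induce s :=
    { toEquiv := ⟨e, f, hleft, hright⟩
      map_rel_iff' := by
        intro i j
        fin_cases i <;> fin_cases j <;>
          simp [e, P3P1, Sym2.eq_iff, axy, ayz, ayx, azy, nxz, nzx, nxw, nyw, nzw,
            nwx, nwy, nwz] }
  exact (hfree s).false iso.symm

/-- From criticality we get a `(k-1)`-coloring of `G - v`. -/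
lemma colSub {V : Type} [Fintype V] {G : SimpleGraph V} {k : ℕ} {v : V}
    (h : (G.induce ({v}ᶜ : Set V)).chromaticNumber < k) :
    (G.induce ({v}ᶜ : Set V)).Colorable (k - 1) := by
  classical
  have h2 := (G.induce ({v}ᶜ : Set V)).colorable_chromaticNumber_of_fintype
  apply h2.mono
  have hne : (G.induce ({v}ᶜ : Set V)).chromaticNumber ≠ ⊤ := by
    intro hh
    rw [hh] at h
    exact not_top_lt h
  have hm := ENat.coe_toNat hne
  have hlt : ((G.induce ({v}ᶜ : Set V)).chromaticNumber.toNat : ℕ∞) < (k : ℕ∞) := by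
    rw [hm]; exact h
  have := Nat.cast_lt.mp hlt
  omega

lemma key {V : Type} [Fintype V] {G : SimpleGraph V} {k : ℕ} (hk : 1 ≤ k)
    (hchi : G.chromaticNumber = k)
    (hdel : ∀ v : V, (G.induce ({v}ᶜ : Set V)).chromaticNumber < k)
    (hfree : InducedFree G P3P1) {a b c : V}
    (hab : a ≠ b) (hac : a ≠ c) (hbc : b ≠ c)
    (nab : ¬ G.Adj a b) (nac : ¬ G.Adj a c) (nbc : ¬ G.Adj b c)
    (hcard : (insert a {x | G.Adj a x ∧ ¬ G.Adj b x ∧ ¬ G.Adj c x} : Set V).ncard ≤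
             (insert b {x | G.Adj b x ∧ ¬ G.Adj a x ∧ ¬ G.Adj c x} : Set V).ncard) :
    False := by
  classical
  set Sa : Set V := {x | G.Adj a x ∧ ¬ G.Adj b x ∧ ¬ G.Adj c x} with hSaDef
  set Sb : Set V := {x | G.Adj b x ∧ ¬ G.Adj a x ∧ ¬ G.Adj c x} with hSbDef
  obtain ⟨ψ⟩ := colSub (hdel a)
  have hbmem : b ∈ ({a}ᶜ : Set V) := Set.mem_compl_singleton_iff.mpr hab.symm
  let g : V → Fin (k - 1) := fun u =>
    if h : u ∈ ({a}ᶜ : Set V) then ψ ⟨u, h⟩ else ψ ⟨b, hbmem⟩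
  have gval : ∀ {u w : V}, u ≠ a → w ≠ a → G.Adj u w → g u ≠ g w := by
    intro u w hu hw huw
    have hu' : u ∈ ({a}ᶜ : Set V) := Set.mem_compl_singleton_iff.mpr hu
    have hw' : w ∈ ({a}ᶜ : Set V) := Set.mem_compl_singleton_iff.mpr hw
    simp only [g, dif_pos hu', dif_pos hw']
    exact ψ.valid (by simpa using huw)
  -- Cb is a clique
  have hCbne : ∀ u ∈ (insert b Sb : Set V), u ≠ a := by
    rintro u (rfl | hu)
    · exact hab.symm
    · intro h; subst h; exact nab hu.1.symm
  have hCbclique : ∀ u ∈ (insert b Sb : Set V), ∀ w ∈ (insert b Sb : Set V),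
      u ≠ w → G.Adj u w := by
    rintro u (rfl | hu) w (rfl | hw) huw
    · exact absurd rfl huw
    · exact hw.1
    · exact hu.1.symm
    · -- both in Sb
      by_contra nuw
      exact free4 hfree huw
        (fun h => nbc (by rw [h]; exact hu.1))
        hbc.symm
        (fun h => nbc (by rw [h]; exact hw.1))
        hu.1.symm hw.1 nuw
        (fun h => hu.2.2 h.symm) nbc (fun h => hw.2.2 h.symm)
  have hginj : Set.InjOn g (insert b Sb : Set V) := by
    intro u hu w hw h
    by_contra hne
    exact gval (hCbne u hu) (hCbne w hw) (hCbclique u hu w hw hne) h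
  -- cardinalities
  have h2 : (g '' (insert b Sb : Set V)).ncard = (insert b Sb : Set V).ncard :=
    Set.ncard_image_of_injOn hginj
  have h3 : (g '' Sa).ncard ≤ Sa.ncard := Set.ncard_image_le (Set.toFinite _)
  have h4 : (insert a Sa : Set V).ncard = Sa.ncard + 1 :=
    Set.ncard_insert_of_notMem (fun h => G.irrefl h.1) (Set.toFinite _)
  have h5 : ¬ (g '' (insert b Sb : Set V) ⊆ g '' Sa) := by
    intro hsub
    have := Set.ncard_le_ncard hsub (Set.toFinite _)
    omega
  obtain ⟨α, hαCb, hαSa⟩ := Set.not_subset.mp h5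
  obtain ⟨b', hb'Cb, hgb'⟩ := hαCb
  -- main claim: recoloring a with α is fine
  have claim : ∀ w : V, w ≠ a → G.Adj a w → α ≠ g w := by
    intro w hwa haw
    by_cases hwSa : w ∈ Sa
    · intro h
      exact hαSa (h ▸ ⟨w, hwSa, rfl⟩)
    · have hbw_or : G.Adj b w ∨ G.Adj c w := by
        by_contra hcon
        push_neg at hcon
        exact hwSa ⟨haw, hcon.1, hcon.2⟩
      have habw : G.Adj b w ∧ G.Adj c w := by
        rcases hbw_or with h | h
        · refine ⟨h, ?_⟩
          by_contra ncw
          exact free4 hfree hab hac.symm (fun hh => nac (hh ▸ haw)) hbc.symm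
            haw h.symm nab nac (fun hh => ncw hh.symm) nbc
        · refine ⟨?_, h⟩
          by_contra nbw
          exact free4 hfree hac hab.symm (fun hh => nab (hh ▸ haw)) hbc
            haw h.symm nac nab (fun hh => nbw hh.symm) (fun hh => nbc hh.symm)
      rcases hb'Cb with rfl | hb'Sb
      · -- b' = b
        have hgw := gval hab.symm hwa habw.1
        intro h
        exact hgw (hgb'.trans h)
      · -- b' ∈ Sb : show w is adjacent to b'
        have hb'a : b' ≠ a := fun hh => nab (hh ▸ hb'Sb.1).symm
        have hwb' : G.Adj w b' := by
          by_contra nwb'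
          exact free4 hfree hac hb'a
            (fun hh => hb'Sb.2.1 (show G.Adj a b' by rw [hh]; exact haw))
            (fun hh => nbc (show G.Adj b c by rw [← hh]; exact hb'Sb.1))
            haw habw.2.symm nac hb'Sb.2.1
            (fun hh => nwb' hh) hb'Sb.2.2
        have hgw := gval hwa hb'a hwb'
        intro h
        exact hgw (h ▸ hgb').symm
  -- build a (k-1)-coloring of G
  let Φ : V → Fin (k - 1) := fun u => if u = a then α else g u
  have hcol : G.Colorable (k - 1) := by
    refine ⟨Coloring.mk Φ ?_⟩
    intro u w huw
    by_cases hu : u = a <;> by_cases hw : w = a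
    · subst hu; subst hw; exact absurd huw (G.irrefl)
    · subst hu
      simp only [Φ, if_pos rfl, if_neg hw]
      exact claim w hw huw
    · subst hw
      simp only [Φ, if_pos rfl, if_neg hu]
      exact fun h => claim u hu huw.symm h.symm
    · simp only [Φ, if_neg hu, if_neg hw]
      exact gval hu hw huw
  have := hcol.chromaticNumber_le
  rw [hchi] at this
  have := Nat.cast_le.mp this
  omega

theorem vertex_critical_P3P1_free_structure {V : Type} [Fintype V] (G : SimpleGraph V)
    (k : ℕ) (hk : 1 ≤ k) (hcrit : IsKVertexCritical G k) (hfree : InducedFree G P3P1) :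
    (∀ s : Set V, _root_.IsIndepSet G s → s.ncard ≤ 2) ∧ Fintype.card V ≤ 2 * k - 1 := by
  classical
  obtain ⟨hchi, hdel⟩ := hcrit
  have halpha : ∀ s : Set V, _root_.IsIndepSet G s → s.ncard ≤ 2 := by
    intro s hs
    by_contra hcon
    push_neg at hcon
    obtain ⟨t, hts, ht3⟩ := Set.exists_subset_card_eq (show 3 ≤ s.ncard by omega)
    obtain ⟨a, b, c, hab, hac, hbc, rfl⟩ := Set.ncard_eq_three.mp ht3
    have ha : a ∈ s := hts (by simp)
    have hb : b ∈ s := hts (by simp)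
    have hc : c ∈ s := hts (by simp)
    have nab : ¬ G.Adj a b := hs ha hb hab
    have nac : ¬ G.Adj a c := hs ha hc hac
    have nbc : ¬ G.Adj b c := hs hb hc hbc
    rcases le_total ((insert a {x | G.Adj a x ∧ ¬ G.Adj b x ∧ ¬ G.Adj c x} : Set V).ncard)
        ((insert b {x | G.Adj b x ∧ ¬ G.Adj a x ∧ ¬ G.Adj c x} : Set V).ncard) with h | h
    · exact key hk hchi hdel hfree hab hac hbc nab nac nbc h
    · exact key hk hchi hdel hfree hab.symm hbc hac
        (fun hh => nab hh.symm) nbc nac h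
  refine ⟨halpha, ?_⟩
  by_cases hV : Nonempty V
  · obtain ⟨v⟩ := hV
    obtain ⟨ψ⟩ := colSub (hdel v)
    have hfib : ∀ i : Fin (k - 1),
        (Finset.univ.filter fun u : ↥({v}ᶜ : Set V) => ψ u = i).card ≤ 2 := by
      intro i
      by_contra hgt
      push_neg at hgt
      obtain ⟨x, hx, y, hy, z, hz, hxy, hxz, hyz⟩ := Finset.two_lt_card.mp hgt
      simp only [Finset.mem_filter] at hx hy hz
      have hnadj : ∀ p q : ↥({v}ᶜ : Set V), ψ p = i → ψ q = i → ¬ G.Adj ↑p ↑q := by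
        intro p q hp hq hA
        exact ψ.valid (by simpa using hA) (hp.trans hq.symm)
      have hindep : _root_.IsIndepSet G ({↑x, ↑y, ↑z} : Set V) := by
        intro p hp q hq hpq
        rcases hp with rfl | rfl | rfl <;> rcases hq with rfl | rfl | rfl <;>
          first
          | exact absurd rfl hpq
          | exact hnadj _ _ (by tauto) (by tauto)
      have h3 : ({↑x, ↑y, ↑z} : Set V).ncard = 3 :=
        Set.ncard_eq_three.mpr ⟨↑x, ↑y, ↑z, Subtype.coe_ne_coe.mpr hxy,
          Subtype.coe_ne_coe.mpr hxz, Subtype.coe_ne_coe.mpr hyz, rfl⟩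
      have h4 := halpha ({(↑x : V), ↑y, ↑z} : Set V) hindep
      rw [h3] at h4
      omega
    have hcount : Fintype.card ↥({v}ᶜ : Set V) ≤ 2 * (k - 1) := by
      have hfw := Finset.card_eq_sum_card_fiberwise
        (f := fun u : ↥({v}ᶜ : Set V) => ψ u) (s := Finset.univ) (t := Finset.univ)
        (fun x _ => Finset.mem_univ _)
      rw [← Finset.card_univ, hfw]
      calc ∑ i ∈ Finset.univ, (Finset.univ.filter
            fun u : ↥({v}ᶜ : Set V) => ψ u = i).card
          ≤ ∑ _i ∈ (Finset.univ : Finset (Fin (k - 1))), 2 :=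
            Finset.sum_le_sum fun i _ => hfib i
        _ = 2 * (k - 1) := by simp [Finset.sum_const, Finset.card_univ, smul_eq_mul, Nat.mul_comm]
    have hcompl : Fintype.card ↥({v}ᶜ : Set V) = Fintype.card V - 1 := by
      rw [Fintype.card_compl_set, Set.card_singleton]
    have hpos : 1 ≤ Fintype.card V := Fintype.card_pos_iff.mpr ⟨v⟩
    omega
  · have : Fintype.card V = 0 := by
      rw [Fintype.card_eq_zero_iff]
      exact not_nonempty_iff.mp hV
    omega
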